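/- Let q ∈ ℂ with |q| < 1 and x ∈ ℂ. The function F_q(t,x) = [2]_q·e^{xt}/(q e^t + 1) is infinitely differentiable on a neighborhood of t = 0 (on which q e^t + 1 ≠ 0), and for every n ≥ 0 its n-th derivative in t at t = 0 equals the q-Euler polynomial E_{n,q}(x) = Σ_{k=0}^{n} C(n,k)·E_{k,q}·x^{n−k}. In particular, for x = 0 the n-th derivative of [2]_q/(q e^t + 1) at t = 0 equals E_{n,q}. -/

import Mathlib

open Finset Topology

private lemma iterSmooth {f : ℂ → ℂ} {s : Set ℂ} (hs : IsOpen s)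
    (hf : ContDiffOn ℂ ⊤ f s) (k : ℕ) : ContDiffOn ℂ ⊤ (iteratedDeriv k f) s := by
  induction k with
  | zero => simpa [iteratedDeriv_zero] using hf
  | succ k ih =>
    rw [iteratedDeriv_succ]
    exact ih.deriv_of_isOpen hs le_top

private lemma hasDerivIter {f : ℂ → ℂ} {s : Set ℂ} (hs : IsOpen s)
    (hf : ContDiffOn ℂ ⊤ f s) (k : ℕ) {x : ℂ} (hx : x ∈ s) :
    HasDerivAt (iteratedDeriv k f) (iteratedDeriv (k + 1) f x) x := by
  have h := ((iterSmooth hs hf k).differentiableOn (by simp)).differentiableAt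
    (hs.mem_nhds hx)
  rw [iteratedDeriv_succ]
  exact h.hasDerivAt

private lemma pascal_sum (a b : ℕ → ℂ) (n : ℕ) :
    ∑ k ∈ range (n + 1), (n.choose k : ℂ) * (a (k+1) * b (n-k) + a k * b (n-k+1))
      = ∑ k ∈ range (n + 2), ((n+1).choose k : ℂ) * (a k * b (n+1-k)) := by
  have hS2 : ∑ k ∈ range (n + 1), (n.choose k : ℂ) * (a k * b (n-k+1))
      = ∑ k ∈ range n, (n.choose (k+1) : ℂ) * (a (k+1) * b (n-(k+1)+1))
        + (n.choose 0 : ℂ) * (a 0 * b (n-0+1)) :=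
    Finset.sum_range_succ' _ n
  have hS3 : ∑ k ∈ range (n + 1), (n.choose (k+1) : ℂ) * (a (k+1) * b (n-k))
      = ∑ k ∈ range n, (n.choose (k+1) : ℂ) * (a (k+1) * b (n-k)) := by
    rw [Finset.sum_range_succ, Nat.choose_succ_self, Nat.cast_zero, zero_mul, add_zero]
  have heq : ∑ k ∈ range n, (n.choose (k+1) : ℂ) * (a (k+1) * b (n-(k+1)+1))
      = ∑ k ∈ range n, (n.choose (k+1) : ℂ) * (a (k+1) * b (n-k)) := by
    refine Finset.sum_congr rfl fun k hk => ?_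
    have : n - (k+1) + 1 = n - k := by
      have := Finset.mem_range.mp hk; omega
    rw [this]
  have hRHS : ∑ k ∈ range (n + 2), ((n+1).choose k : ℂ) * (a k * b (n+1-k))
      = ∑ k ∈ range (n+1), ((n+1).choose (k+1) : ℂ) * (a (k+1) * b (n+1-(k+1)))
        + ((n+1).choose 0 : ℂ) * (a 0 * b (n+1-0)) :=
    Finset.sum_range_succ' _ (n+1)
  rw [hRHS]
  simp only [Nat.choose_succ_succ, Nat.cast_add, Nat.succ_sub_succ_eq_sub,
    Nat.choose_zero_right, Nat.cast_one, one_mul, Nat.sub_zero, add_mul]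
  rw [Finset.sum_add_distrib]
  simp only [mul_add]
  rw [Finset.sum_add_distrib, hS2, heq, ← hS3]
  simp only [Nat.choose_zero_right, Nat.cast_one, one_mul, Nat.sub_zero]
  ring

private lemma leibniz {f g : ℂ → ℂ} {s : Set ℂ} (hs : IsOpen s)
    (hf : ContDiffOn ℂ ⊤ f s) (hg : ContDiffOn ℂ ⊤ g s) :
    ∀ n : ℕ, ∀ x ∈ s, iteratedDeriv n (fun t => f t * g t) x
      = ∑ k ∈ range (n + 1), (n.choose k : ℂ) *
          (iteratedDeriv k f x * iteratedDeriv (n - k) g x) := by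
  intro n
  induction n with
  | zero => intro x hx; simp
  | succ n ih =>
    intro x hx
    have hev : iteratedDeriv n (fun t => f t * g t) =ᶠ[𝓝 x]
        fun y => ∑ k ∈ range (n + 1), (n.choose k : ℂ) *
          (iteratedDeriv k f y * iteratedDeriv (n - k) g y) :=
      Filter.eventually_of_mem (hs.mem_nhds hx) ih
    rw [iteratedDeriv_succ, hev.deriv_eq]
    have hterm : ∀ k ∈ range (n + 1), HasDerivAt
        (fun y => (n.choose k : ℂ) * (iteratedDeriv k f y * iteratedDeriv (n - k) g y))
        ((n.choose k : ℂ) * (iteratedDeriv (k+1) f x * iteratedDeriv (n-k) g x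
          + iteratedDeriv k f x * iteratedDeriv (n-k+1) g x)) x := by
      intro k _
      exact ((hasDerivIter hs hf k hx).mul (hasDerivIter hs hg (n-k) hx)).const_mul _
    rw [(HasDerivAt.fun_sum hterm).deriv]
    have := pascal_sum (fun k => iteratedDeriv k f x) (fun k => iteratedDeriv k g x) n
    simpa using this

private lemma iterConstZero (c : ℂ) (n : ℕ) (hn : 1 ≤ n) :
    iteratedDeriv n (fun _ : ℂ => c) = fun _ => 0 := by
  induction n with
  | zero => omega
  | succ n ih =>
    rcases Nat.eq_zero_or_pos n with h | h
    · subst h; simp [iteratedDeriv_one]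
    · rw [iteratedDeriv_succ, ih h]
      funext t; simp

private lemma iterQExp (q : ℂ) (m : ℕ) :
    iteratedDeriv m (fun t : ℂ => q * Complex.exp t) = fun t => q * Complex.exp t := by
  induction m with
  | zero => simp [iteratedDeriv_zero]
  | succ m ih =>
    rw [iteratedDeriv_succ, ih]
    funext t
    rw [deriv_const_mul_field, Complex.deriv_exp]

private lemma iterDenom (q : ℂ) (m : ℕ) :
    iteratedDeriv (m + 1) (fun t : ℂ => q * Complex.exp t + 1) 0 = q := by
  rw [iteratedDeriv_succ']
  have hd : deriv (fun t : ℂ => q * Complex.exp t + 1) = fun t => q * Complex.exp t := by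
    funext t
    exact (((Complex.hasDerivAt_exp t).const_mul q).add_const 1).deriv
  rw [hd, iterQExp]
  simp

theorem q_euler_polynomial_generating_function (q : ℂ) (hq : ‖q‖ < 1) (x : ℂ)
    (E : ℕ → ℂ) (hE0 : E 0 = 1)
    (hE : ∀ m : ℕ, 1 ≤ m →
      q * ∑ k ∈ range (m + 1), (m.choose k : ℂ) * E k + E m = 0) :
    ∃ U : Set ℂ, IsOpen U ∧ (0 : ℂ) ∈ U ∧
      (∀ t ∈ U, q * Complex.exp t + 1 ≠ 0) ∧
      ContDiffOn ℂ ⊤ (fun t => (1 + q) * Complex.exp (x * t) / (q * Complex.exp t + 1)) U ∧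
      (∀ n : ℕ,
        iteratedDeriv n (fun t => (1 + q) * Complex.exp (x * t) / (q * Complex.exp t + 1)) 0
          = ∑ k ∈ range (n + 1), (n.choose k : ℂ) * E k * x ^ (n - k)) ∧
      (∀ n : ℕ,
        iteratedDeriv n (fun t => (1 + q) / (q * Complex.exp t + 1)) 0 = E n) := by
  have hq1 : q + 1 ≠ 0 := by
    intro h
    have : q = -1 := by linear_combination h
    rw [this] at hq
    simp at hq
  set U : Set ℂ := (fun t => q * Complex.exp t + 1) ⁻¹' {0}ᶜ with hUdef
  have hD : ContDiff ℂ ⊤ (fun t : ℂ => q * Complex.exp t + 1) :=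
    (contDiff_const.mul Complex.contDiff_exp).add contDiff_const
  have hUopen : IsOpen U := isOpen_compl_singleton.preimage hD.continuous
  have hne : ∀ t ∈ U, q * Complex.exp t + 1 ≠ 0 := fun t ht => ht
  have h0 : (0 : ℂ) ∈ U := by
    simp only [hUdef, Set.mem_preimage, Set.mem_compl_iff, Set.mem_singleton_iff,
      Complex.exp_zero, mul_one]
    exact fun h => hq1 (by linear_combination h)
  set G : ℂ → ℂ := fun t => (1 + q) / (q * Complex.exp t + 1) with hGdef
  have hGc : ContDiffOn ℂ ⊤ G U := contDiffOn_const.div hD.contDiffOn hne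
  have hXc : ContDiff ℂ ⊤ (fun t : ℂ => Complex.exp (x * t)) :=
    Complex.contDiff_exp.comp (contDiff_const.mul contDiff_id)
  have hFc : ContDiffOn ℂ ⊤
      (fun t => (1 + q) * Complex.exp (x * t) / (q * Complex.exp t + 1)) U :=
    (contDiff_const.mul hXc).contDiffOn.div hD.contDiffOn hne
  set e : ℕ → ℂ := fun n => iteratedDeriv n G 0 with hedef
  have he0 : e 0 = 1 := by
    simp only [hedef, iteratedDeriv_zero, hGdef, Complex.exp_zero, mul_one]
    rw [div_eq_one_iff_eq (by intro h; exact hq1 (by linear_combination h))]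
    ring
  -- the functional equation on U
  have hfun : Set.EqOn (fun t => (q * Complex.exp t + 1) * G t) (fun _ => 1 + q) U := by
    intro t ht
    simp only [hGdef, mul_div_assoc']
    rw [mul_comm]
    exact mul_div_cancel_right₀ _ (hne t ht)
  -- recurrence for e
  have herec : ∀ m : ℕ, 1 ≤ m →
      q * ∑ k ∈ range (m + 1), (m.choose k : ℂ) * e k + e m = 0 := by
    intro m hm
    have h1 := hfun.iteratedDeriv_of_isOpen hUopen m h0
    rw [leibniz hUopen hD.contDiffOn hGc m 0 h0] at h1
    obtain ⟨m', rfl⟩ := Nat.exists_eq_add_of_le hm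
    rw [iterConstZero _ _ (by omega)] at h1
    rw [Finset.sum_range_succ' _ (1 + m')] at h1
    simp only [iteratedDeriv_zero, Complex.exp_zero, mul_one, Nat.choose_zero_right,
      Nat.cast_one, one_mul, Nat.sub_zero] at h1
    -- h1 : ∑ k in range (1+m'), C(1+m',k+1) * (iD (k+1) denom 0 * e (1+m'-(k+1)))
    --        + (q+1) * e (1+m') = 0
    have h2 : ∀ k ∈ range (1 + m'),
        ((1 + m').choose (k + 1) : ℂ) *
            (iteratedDeriv (k + 1) (fun t => q * Complex.exp t + 1) 0 *
              iteratedDeriv (1 + m' - (k + 1)) G 0)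
          = ((1 + m').choose (k + 1) : ℂ) * (q * e (m' - k)) := by
      intro k hk
      rw [iterDenom, show 1 + m' - (k + 1) = m' - k from by omega]
    rw [Finset.sum_congr rfl h2] at h1
    -- now reflect the sum
    have h3 : ∑ k ∈ range (1 + m'), ((1 + m').choose (k + 1) : ℂ) * (q * e (m' - k))
        = ∑ k ∈ range (1 + m'), ((1 + m').choose k : ℂ) * (q * e k) := by
      rw [← Finset.sum_range_reflect]
      refine Finset.sum_congr rfl fun k hk => ?_
      have hk' := Finset.mem_range.mp hk
      have e1 : 1 + m' - 1 - k + 1 = 1 + m' - k := by omega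
      have e2 : m' - (1 + m' - 1 - k) = k := by omega
      rw [e1, e2, Nat.choose_symm (by omega)]
    rw [h3] at h1
    have h4 : q * ∑ k ∈ range (1 + m' + 1), ((1 + m').choose k : ℂ) * e k
        = ∑ k ∈ range (1 + m'), ((1 + m').choose k : ℂ) * (q * e k) + q * e (1 + m') := by
      rw [Finset.sum_range_succ, mul_add, Finset.mul_sum, Nat.choose_self]
      simp only [Nat.cast_one, one_mul]
      congr 1
      refine Finset.sum_congr rfl fun k _ => by ring
    rw [h4]
    linear_combination h1
  -- uniqueness : e = E
  have key : ∀ n, e n = E n := by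
    intro n
    induction n using Nat.strong_induction_on with
    | _ n ih =>
      match n with
      | 0 => rw [he0, hE0]
      | (m + 1) =>
        have h1 := herec (m + 1) (by omega)
        have h2 := hE (m + 1) (by omega)
        have hS : ∑ k ∈ range (m + 1), ((m + 1).choose k : ℂ) * e k
            = ∑ k ∈ range (m + 1), ((m + 1).choose k : ℂ) * E k := by
          refine Finset.sum_congr rfl fun k hk => ?_
          rw [ih k (by have := Finset.mem_range.mp hk; omega)]
        rw [Finset.sum_range_succ] at h1 h2
        rw [hS] at h1
        have : (q + 1) * e (m + 1) = (q + 1) * E (m + 1) := by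
          rw [Nat.choose_self] at h1 h2
          push_cast at h1 h2
          linear_combination h1 - h2
        exact mul_left_cancel₀ hq1 this
  have key' : ∀ n, iteratedDeriv n G 0 = E n := key
  refine ⟨U, hUopen, h0, hne, hFc, ?_, fun n => key' n⟩
  -- the polynomial identity
  intro n
  have hFG : (fun t => (1 + q) * Complex.exp (x * t) / (q * Complex.exp t + 1))
      = fun t => Complex.exp (x * t) * G t := by
    funext t; simp only [hGdef]; ring
  rw [hFG, leibniz hUopen hXc.contDiffOn hGc n 0 h0]
  have hx : ∀ k, iteratedDeriv k (fun t : ℂ => Complex.exp (x * t)) 0 = x ^ k := by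
    intro k
    rw [iteratedDeriv_cexp_const_mul]
    simp
  have step : ∑ k ∈ range (n + 1), (n.choose k : ℂ) *
      (iteratedDeriv k (fun t : ℂ => Complex.exp (x * t)) 0 * iteratedDeriv (n - k) G 0)
      = ∑ k ∈ range (n + 1), (n.choose k : ℂ) * (x ^ k * E (n - k)) := by
    refine Finset.sum_congr rfl fun k _ => ?_
    rw [hx k, key' (n - k)]
  rw [step, ← Finset.sum_range_reflect]
  refine Finset.sum_congr rfl fun k hk => ?_
  have hk' := Finset.mem_range.mp hk
  have e1 : n + 1 - 1 - k = n - k := by omega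
  have e2 : n - (n - k) = k := by omega
  rw [e1, e2, Nat.choose_symm (by omega)]
  ring
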